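/- L^∞ dispersive bound for the time-translated frequency-localized Schrödinger kernel on R^3 × T: let K_N(x,y,t) = [∫_{R^3} (η¹_{≤N}(ξ_1) η¹_{≤N}(ξ_2) η¹_{≤N}(ξ_3))² e^{i(x·ξ + t|ξ|²)} dξ] · [Σ_{k∈Z} (η¹_{≤N}(k))² e^{i(yk + tk²)}] and K_{N,γ}(x,y,t) = K_N(x,y, 2πγ + t). Then for |γ| ≥ 3 and |t| ≤ 2π one has ‖K_{N,γ}‖_{L^∞_{x,y,t}} ≲ |γ|^{−3/2} N, and moreover ‖F_{x,y,t} K_{N,γ}‖_{L^∞_{ξ,k,τ}} ≲ 1. -/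

import Mathlib

open MeasureTheory Filter Topology Set
open scoped ENNReal BigOperators Classical

noncomputable section

instance : Fact (0 < 2 * Real.pi) := ⟨by positivity⟩

/-- The waveguide manifold `ℝ^m × 𝕋` with `𝕋 = ℝ/(2πℤ)`. -/
abbrev WG (m : ℕ) := (Fin m → ℝ) × AddCircle (2 * Real.pi)

/-- Euclidean length of a vector of `Fin d → ℝ`. -/
def rnorm {d : ℕ} (x : Fin d → ℝ) : ℝ := Real.sqrt (∑ i, x i ^ 2)

/-- Fourier transform on the waveguide: Fourier integral in `x ∈ ℝ^m`,
Fourier coefficient in `y ∈ 𝕋`; frequency variable `(ξ, k) ∈ ℝ^m × ℤ`. -/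
def wFT {m : ℕ} (f : WG m → ℂ) (ξ : Fin m → ℝ) (k : ℤ) : ℂ :=
  ∫ x : Fin m → ℝ,
    Complex.exp (-Complex.I * ((∑ i, ξ i * x i : ℝ) : ℂ)) * fourierCoeff (fun y => f (x, y)) k

/-- Fourier multiplier operator on the waveguide with symbol `sym`. -/
def fmul {m : ℕ} (sym : (Fin m → ℝ) → ℤ → ℂ) (f : WG m → ℂ) : WG m → ℂ :=
  fun p => (((2 * Real.pi) ^ m : ℝ)⁻¹ : ℂ) * ∑' k : ℤ, ∫ ξ : Fin m → ℝ,
    sym ξ k * wFT f ξ k * Complex.exp (Complex.I * ((∑ i, ξ i * p.1 i : ℝ) : ℂ)) * fourier k p.2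

/-- The linear Schrödinger propagator `e^{itΔ}` on the waveguide `ℝ^m × 𝕋`,
i.e. the Fourier multiplier with symbol `e^{-it(|ξ|² + k²)}`. -/
def sprop (m : ℕ) (t : ℝ) (f : WG m → ℂ) : WG m → ℂ :=
  fmul (fun ξ k =>
    Complex.exp (-Complex.I * (t : ℂ) * (((∑ i, ξ i ^ 2) + (k : ℝ) ^ 2 : ℝ) : ℂ))) f

/-- A fixed radial smooth bump function, equal to `1` on the unit ball
and vanishing outside the ball of radius `2`. -/
structure IsLPBump {d : ℕ} (φ : (Fin d → ℝ) → ℝ) : Prop where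
  smooth : ContDiff ℝ (⊤ : ℕ∞) φ
  radial : ∀ x y : Fin d → ℝ, rnorm x = rnorm y → φ x = φ y
  eq_one : ∀ x, rnorm x ≤ 1 → φ x = 1
  eq_zero : ∀ x, 2 ≤ rnorm x → φ x = 0

/-- Littlewood–Paley projector `P_{≤N}` on the waveguide, built from the bump `φ`
acting in the full frequency variable `(ξ, k) ∈ ℝ^m × ℤ ⊂ ℝ^{m+1}`. -/
def PleN {m : ℕ} (φ : (Fin (m+1) → ℝ) → ℝ) (N : ℝ) (f : WG m → ℂ) : WG m → ℂ :=
  fmul (fun ξ k => ((φ (N⁻¹ • (Fin.snoc ξ ((k:ℤ) : ℝ) : Fin (m+1) → ℝ)) : ℝ) : ℂ)) f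

/-- Dyadic Littlewood–Paley piece `P_N` with `N = 2^j ≥ 1`:
`P_1 = P_{≤1}` and `P_N = P_{≤N} - P_{≤N/2}` for `N ≥ 2`. -/
def PNd {m : ℕ} (φ : (Fin (m+1) → ℝ) → ℝ) (j : ℕ) (f : WG m → ℂ) : WG m → ℂ :=
  if j = 0 then PleN φ 1 f
  else fun z => PleN φ ((2:ℝ) ^ j) f z - PleN φ ((2:ℝ) ^ (j-1)) f z

/-- Space-time `L^p` norm of `u : ℝ → WG m → ℂ` on the time region `I`. -/
def stLp (m : ℕ) (p : ℝ) (u : ℝ → WG m → ℂ) (I : Set ℝ) : ℝ≥0∞ :=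
  eLpNorm (fun q : WG m × ℝ => u q.2 q.1) (ENNReal.ofReal p)
    ((volume : Measure (WG m)).prod (Measure.restrict volume I))

/-- `l^q_γ L^p_{x,y,t}` norm: the `l^q` norm over `γ ∈ ℤ` of the space-time `L^p`
norms on the time windows `[2πγ, 2π(γ+1))`. -/
def lqLp (m : ℕ) (q p : ℝ) (u : ℝ → WG m → ℂ) : ℝ≥0∞ :=
  (∑' γ : ℤ, stLp m p u (Set.Ico (2*Real.pi*(γ:ℝ)) (2*Real.pi*((γ:ℝ)+1))) ^ q) ^ (1/q)

/-- `H¹` (Sobolev) norm on the waveguide, defined on the Fourier side. -/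
def H1n (m : ℕ) (f : WG m → ℂ) : ℝ≥0∞ :=
  (∑' k : ℤ, ∫⁻ ξ : Fin m → ℝ,
    ENNReal.ofReal (1 + rnorm ξ ^ 2 + (k:ℝ)^2) * (‖wFT f ξ k‖₊ : ℝ≥0∞) ^ 2) ^ (1/2 : ℝ)

/-- Membership in `H¹(ℝ^m × 𝕋)`. -/
def MemH1 (m : ℕ) (f : WG m → ℂ) : Prop := MemLp f 2 volume ∧ H1n m f < ⊤

/-- A `U²` atom: a step function in time, with `L²_{x,y}`-valued steps whose
squared norms sum to at most 1. -/
def IsU2Atom (m : ℕ) (a : ℝ → WG m → ℂ) : Prop :=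
  ∃ (n : ℕ) (t : Fin (n+1) → ℝ) (φ : Fin n → WG m → ℂ),
    StrictMono t ∧ (∑ j : Fin n, eLpNorm (φ j) 2 volume ^ 2) ≤ 1 ∧
    ∀ s z, a s z = ∑ j : Fin n, if t j.castSucc ≤ s ∧ s < t j.succ then φ j z else 0

/-- The atomic `U²` norm. -/
def U2norm (m : ℕ) (u : ℝ → WG m → ℂ) : ℝ≥0∞ :=
  sInf { c : ℝ≥0∞ | ∃ (lam : ℕ → ℂ) (a : ℕ → ℝ → WG m → ℂ),
    (∀ j, IsU2Atom m (a j)) ∧ (∀ s z, u s z = ∑' j, lam j * a j s z) ∧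
    c = ∑' j, (‖lam j‖₊ : ℝ≥0∞) }

/-- The `U²_Δ` norm: `U²` norm of `t ↦ e^{-itΔ} u(t)`. -/
def U2Δ (m : ℕ) (u : ℝ → WG m → ℂ) : ℝ≥0∞ := U2norm m (fun t => sprop m (-t) (u t))

/-- The `V²` (2-variation) norm. -/
def V2norm (m : ℕ) (v : ℝ → WG m → ℂ) : ℝ≥0∞ :=
  ⨆ (n : ℕ) (t : Fin (n+1) → ℝ) (_ : StrictMono t),
    (∑ j : Fin n, eLpNorm (fun z => v (t j.succ) z - v (t j.castSucc) z) 2 volume ^ 2) ^ (1/2 : ℝ)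

/-- The `V²_Δ` norm: `V²` norm of `t ↦ e^{-itΔ} v(t)`. -/
def V2Δ (m : ℕ) (v : ℝ → WG m → ℂ) : ℝ≥0∞ := V2norm m (fun t => sprop m (-t) (v t))

/-- Frequency projection onto the unit cube `C_c = c + [-1/2, 1/2)^{m+1}`, `c ∈ ℤ^{m+1}`. -/
def Pcube {m : ℕ} (c : Fin (m+1) → ℤ) (f : WG m → ℂ) : WG m → ℂ :=
  fmul (fun ξ k =>
    if ∀ i, ((c i : ℝ) - 1/2 ≤ (Fin.snoc ξ ((k:ℤ) : ℝ) : Fin (m+1) → ℝ) i ∧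
        (Fin.snoc ξ ((k:ℤ) : ℝ) : Fin (m+1) → ℝ) i < (c i : ℝ) + 1/2) then 1 else 0) f

/-- The `X^s_0(ℝ)` norm: `‖u‖² = Σ_{c ∈ ℤ^{m+1}} ⟨c⟩^{2s} ‖P_{C_c} u‖²_{U²_Δ}`. -/
def X0norm (m : ℕ) (s : ℝ) (u : ℝ → WG m → ℂ) : ℝ≥0∞ :=
  (∑' c : Fin (m+1) → ℤ,
    ENNReal.ofReal ((1 + ∑ i, (c i : ℝ)^2) ^ s) * U2Δ m (fun t => Pcube c (u t)) ^ 2) ^ (1/2 : ℝ)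

/-- The `Y^s(ℝ)` norm: `‖u‖² = Σ_{c ∈ ℤ^{m+1}} ⟨c⟩^{2s} ‖P_{C_c} u‖²_{V²_Δ}`. -/
def Y0full (m : ℕ) (s : ℝ) (u : ℝ → WG m → ℂ) : ℝ≥0∞ :=
  (∑' c : Fin (m+1) → ℤ,
    ENNReal.ofReal ((1 + ∑ i, (c i : ℝ)^2) ^ s) * V2Δ m (fun t => Pcube c (u t)) ^ 2) ^ (1/2 : ℝ)

/-- Restriction `Y^s(I)` norm. -/
def Ynorm (m : ℕ) (s : ℝ) (u : ℝ → WG m → ℂ) (I : Set ℝ) : ℝ≥0∞ :=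
  sInf { c | ∃ v : ℝ → WG m → ℂ, (∀ t ∈ I, v t = u t) ∧ c = Y0full m s v }

/-- The modified global `X¹(ℝ)` norm, allowing a free evolution `e^{itΔ}φ₋` at `t = -∞`:
`‖u‖² = ‖φ₋‖²_{H¹} + ‖u - e^{itΔ}φ₋‖²_{X¹_0}`. -/
def X1normR (m : ℕ) (u : ℝ → WG m → ℂ) : ℝ≥0∞ :=
  sInf { c | ∃ φ : WG m → ℂ, MemH1 m φ ∧
    Tendsto (fun t => H1n m (fun z => sprop m (-t) (u t) z - φ z)) atBot (𝓝 0) ∧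
    c = (H1n m φ ^ 2 + X0norm m 1 (fun t z => u t z - sprop m t φ z) ^ 2) ^ (1/2 : ℝ) }

/-- Restriction `X¹(I)` norm. -/
def X1norm (m : ℕ) (u : ℝ → WG m → ℂ) (I : Set ℝ) : ℝ≥0∞ :=
  sInf { c | ∃ v : ℝ → WG m → ℂ, (∀ t ∈ I, v t = u t) ∧ c = X1normR m v }

/-- The scattering `Z(I)` norm for the cubic `ℝ³ × 𝕋` problem (with exponent `p₀`):
`‖u‖_{Z(I)} = (Σ_{N ≥ 1 dyadic} N^{6-p₀} ‖1_I P_N u‖^{p₀}_{l^{2p₀/(p₀-3)}_γ L^{p₀}})^{1/p₀}`. -/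
def Znorm3 (φ : (Fin 4 → ℝ) → ℝ) (p₀ : ℝ) (u : ℝ → WG 3 → ℂ) (I : Set ℝ) : ℝ≥0∞ :=
  (∑' j : ℕ, ENNReal.ofReal (((2:ℝ) ^ j) ^ (6 - p₀)) *
    lqLp 3 (2*p₀/(p₀-3)) p₀ (Set.indicator I (fun t => PNd φ j (u t))) ^ p₀) ^ (1/p₀)

/-- The `Z'(I)` norm for the cubic `ℝ³ × 𝕋` problem: `‖u‖_{Z'} = ‖u‖_Z^{3/4} ‖u‖_{X¹}^{1/4}`. -/
def Zprime3 (φ : (Fin 4 → ℝ) → ℝ) (p₀ : ℝ) (u : ℝ → WG 3 → ℂ) (I : Set ℝ) : ℝ≥0∞ :=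
  Znorm3 φ p₀ u I ^ (3/4 : ℝ) * X1norm 3 u I ^ (1/4 : ℝ)

/-- Auxiliary piece of the quintic `Z` norm with exponent `p₀`. -/
def Z2aux (φ : (Fin 3 → ℝ) → ℝ) (p₀ : ℝ) (u : ℝ → WG 2 → ℂ) (I : Set ℝ) : ℝ≥0∞ :=
  (∑' j : ℕ, ENNReal.ofReal (((2:ℝ) ^ j) ^ (5 - p₀/2)) *
    lqLp 2 (4*p₀/(p₀-4)) p₀ (Set.indicator I (fun t => PNd φ j (u t))) ^ p₀) ^ (1/p₀)

/-- The scattering `Z(I)` norm for the quintic `ℝ² × 𝕋` problem: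
`‖u‖_{Z(I)} = Σ_{p₀ = 8, 10} (Σ_{N≥1} N^{5-p₀/2} ‖1_I P_N u‖^{p₀}_{l^{4p₀/(p₀-4)}_γ L^{p₀}})^{1/p₀}`. -/
def Znorm2 (φ : (Fin 3 → ℝ) → ℝ) (u : ℝ → WG 2 → ℂ) (I : Set ℝ) : ℝ≥0∞ :=
  Z2aux φ 8 u I + Z2aux φ 10 u I

/-- The `Z'(I)` norm for the quintic `ℝ² × 𝕋` problem. -/
def Zprime2 (φ : (Fin 3 → ℝ) → ℝ) (u : ℝ → WG 2 → ℂ) (I : Set ℝ) : ℝ≥0∞ :=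
  Znorm2 φ u I ^ (3/4 : ℝ) * X1norm 2 u I ^ (1/4 : ℝ)

/-- The Duhamel `N(I)` norm for an interval `I` with left endpoint `a`:
`‖h‖_{N(I)} = ‖∫_a^t e^{i(t-s)Δ} h(s) ds‖_{X¹(I)}`. -/
def Nnorm (m : ℕ) (a : ℝ) (h : ℝ → WG m → ℂ) (I : Set ℝ) : ℝ≥0∞ :=
  X1norm m (fun t z => ∫ s in a..t, sprop m (t - s) (h s) z) I

/-- The defocusing power nonlinearity `|f|^{pw} f`. -/
def nonlin (m pw : ℕ) (f : WG m → ℂ) : WG m → ℂ := fun z => ((‖f z‖ : ℝ) : ℂ) ^ pw * f z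

/-- `u` is a strong solution on `I` of `(i∂_t + Δ)u = |u|^{pw} u` with data `u₀` at time `t₀`,
i.e. `u` satisfies the Duhamel integral equation. -/
def IsSolution (m pw : ℕ) (u : ℝ → WG m → ℂ) (t₀ : ℝ) (u₀ : WG m → ℂ) (I : Set ℝ) : Prop :=
  ∀ t ∈ I, ∀ᵐ z ∂(volume : Measure (WG m)), u t z =
    sprop m (t - t₀) u₀ z - Complex.I * ∫ s in t₀..t, sprop m (t - s) (nonlin m pw (u s)) z

/-- `u` is a strong solution on `I` of the approximate equation
`(i∂_t + Δ)u = ρ |u|^{pw} u + e`. -/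
def IsApproxSolution (m pw : ℕ) (ρ : ℝ) (u e : ℝ → WG m → ℂ) (I : Set ℝ) : Prop :=
  ∀ t₀ ∈ I, ∀ t ∈ I, ∀ᵐ z ∂(volume : Measure (WG m)), u t z =
    sprop m (t - t₀) (u t₀) z -
      Complex.I * ∫ s in t₀..t,
        ((ρ : ℂ) * sprop m (t - s) (nonlin m pw (u s)) z + sprop m (t - s) (e s) z)

/-- Membership in `C(I : H¹)`. -/
def ContH1 (m : ℕ) (u : ℝ → WG m → ℂ) (I : Set ℝ) : Prop :=
  (∀ t ∈ I, MemH1 m (u t)) ∧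
  ∀ t₀ ∈ I, Tendsto (fun t => H1n m (fun z => u t z - u t₀ z)) (𝓝[I] t₀) (𝓝 0)

/-- Membership in the uniqueness space `X¹_c(I) = X¹(I) ∩ C(I : H¹)`. -/
def MemX1c (m : ℕ) (u : ℝ → WG m → ℂ) (I : Set ℝ) : Prop :=
  X1norm m u I < ⊤ ∧ ContH1 m u I

/-- Membership in `X¹_{c,loc}(I)`: in `C_loc(I : H¹)` with finite `X¹(J)` norm
for every compact `J ⊆ I`. -/
def MemX1cloc (m : ℕ) (u : ℝ → WG m → ℂ) (I : Set ℝ) : Prop :=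
  ContH1 m u I ∧ ∀ J : Set ℝ, IsCompact J → J ⊆ I → X1norm m u J < ⊤

/-- Hölder conjugate exponent. -/
def hconj (p : ℝ) : ℝ := p / (p - 1)

/-- `h : ℝ → WG m → ℂ` is `C_c^∞` in the sense that it lifts to a smooth function
on `ℝ^m × ℝ × ℝ`, periodic in `y` and compactly supported in `(x, t)`. -/
def IsSmoothCc (m : ℕ) (h : ℝ → WG m → ℂ) : Prop :=
  ∃ H : (Fin m → ℝ) → ℝ → ℝ → ℂ,
    ContDiff ℝ (⊤ : ℕ∞) (fun q : ((Fin m → ℝ) × ℝ) × ℝ => H q.1.1 q.1.2 q.2) ∧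
    (∀ x y t, H x (y + 2 * Real.pi) t = H x y t) ∧
    (∃ R : ℝ, ∀ x y t, R ≤ rnorm x ∨ R ≤ |t| → H x y t = 0) ∧
    ∀ (x : Fin m → ℝ) (y t : ℝ), h t (x, (y : AddCircle (2 * Real.pi))) = H x y t

/-- Fourier transform on `ℝ^d`. -/
def rFT (d : ℕ) (f : (Fin d → ℝ) → ℂ) (ξ : Fin d → ℝ) : ℂ :=
  ∫ x : Fin d → ℝ, Complex.exp (-Complex.I * ((∑ i, ξ i * x i : ℝ) : ℂ)) * f x

/-- The free Schrödinger propagator `e^{itΔ}` on `ℝ^d`. -/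
def rprop (d : ℕ) (t : ℝ) (f : (Fin d → ℝ) → ℂ) : (Fin d → ℝ) → ℂ :=
  fun x => (((2 * Real.pi) ^ d : ℝ)⁻¹ : ℂ) * ∫ ξ : Fin d → ℝ,
    Complex.exp (Complex.I * (((∑ i, ξ i * x i) - t * (∑ i, ξ i ^ 2) : ℝ) : ℂ)) * rFT d f ξ

/-- The representative in `[-π, π)` of a point of `𝕋 = ℝ/(2πℤ)`. -/
def toBall (y : AddCircle (2 * Real.pi)) : ℝ :=
  ((AddCircle.equivIco (2 * Real.pi) (-Real.pi)) y : ℝ)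

/-- The rescaled Euclidean profile `f_N` on `ℝ³ × 𝕋` associated to `ψ ∈ Ḣ¹(ℝ⁴)`:
`f_N(y) = φ_N(Ψ^{-1}(y))` where `φ_N(x) = N η(N^{1/2} x) ψ(Nx)`. -/
def fNprof (η : (Fin 4 → ℝ) → ℝ) (ψ : (Fin 4 → ℝ) → ℂ) (N : ℝ) : WG 3 → ℂ :=
  fun p => (N : ℂ) * ((η (Real.sqrt N • (Fin.snoc p.1 (toBall p.2) : Fin 4 → ℝ)) : ℝ) : ℂ) *
    ψ (N • (Fin.snoc p.1 (toBall p.2) : Fin 4 → ℝ))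

/-- The frequency-localized Schrödinger kernel on `ℝ³ × 𝕋` (lifted to `y ∈ ℝ`),
written as a tensor product of an `ℝ³` kernel and a `𝕋` kernel. -/
def KN (φ1 : ℝ → ℝ) (N : ℝ) (x : Fin 3 → ℝ) (y t : ℝ) : ℂ :=
  (∫ ξ : Fin 3 → ℝ, ((∏ i, φ1 (ξ i / N) ^ 2 : ℝ) : ℂ) *
      Complex.exp (Complex.I * (((∑ i, x i * ξ i) + t * (∑ i, ξ i ^ 2) : ℝ) : ℂ))) *
  ∑' k : ℤ, ((φ1 ((k : ℝ) / N) ^ 2 : ℝ) : ℂ) *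
      Complex.exp (Complex.I * ((y * (k:ℝ) + t * (k:ℝ)^2 : ℝ) : ℂ))

/-- Space-time Fourier transform (frequency `(ξ, k, τ)`) of a kernel on
`ℝ³ × 𝕋 × [-2π, 2π]`, lifted to `y ∈ ℝ`. -/
def stFT3 (F : (Fin 3 → ℝ) → ℝ → ℝ → ℂ) (ξ : Fin 3 → ℝ) (k : ℤ) (τ : ℝ) : ℂ :=
  ∫ t in Set.Icc (-(2*Real.pi)) (2*Real.pi), ∫ y in Set.Ioc 0 (2*Real.pi), ∫ x : Fin 3 → ℝ,
    F x y t * Complex.exp (-Complex.I * (((∑ i, x i * ξ i) + y * (k:ℝ) + t * τ : ℝ) : ℂ))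

/-- The Besov-type functional `Λ_∞` on sequences in `H¹(ℝ³ × 𝕋)`:
`limsup_k sup_{N,t,x,y} N^{-1} |(e^{itΔ} P_N f_k)(x,y)|`. -/
def Lam3 (φ : (Fin 4 → ℝ) → ℝ) (f : ℕ → WG 3 → ℂ) : ℝ≥0∞ :=
  Filter.limsup (fun k => ⨆ (j : ℕ) (t : ℝ) (z : WG 3),
    (ENNReal.ofReal ((2:ℝ) ^ j))⁻¹ * (‖PNd φ j (sprop 3 t (f k)) z‖₊ : ℝ≥0∞)) atTop

/-- The Besov-type functional `Λ_∞` on sequences in `H¹(ℝ² × 𝕋)`: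
`limsup_k sup_{N,t,x,y} N^{-1/2} |(e^{itΔ} P_N f_k)(x,y)|`. -/
def Lam2 (φ : (Fin 3 → ℝ) → ℝ) (f : ℕ → WG 2 → ℂ) : ℝ≥0∞ :=
  Filter.limsup (fun k => ⨆ (j : ℕ) (t : ℝ) (z : WG 2),
    (ENNReal.ofReal (((2:ℝ) ^ j) ^ (1/2 : ℝ)))⁻¹ * (‖PNd φ j (sprop 2 t (f k)) z‖₊ : ℝ≥0∞)) atTop

end



section KDBAux
noncomputable section
open MeasureTheory intervalIntegral Complex Set



lemma KDB_norm_exp_mul_I (r : ℝ) : ‖Complex.exp (Complex.I * r)‖ = 1 := by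
  rw [mul_comm]; exact Complex.norm_exp_ofReal_mul_I r

lemma KDB_norm_exp_neg_I_mul (r : ℝ) : ‖Complex.exp (-Complex.I * r)‖ = 1 := by
  have : -Complex.I * r = Complex.I * ((-r : ℝ) : ℂ) := by push_cast; ring
  rw [this]; exact KDB_norm_exp_mul_I (-r)

lemma KDB_norm_exp_quad (s : ℝ) (u : ℝ) :
    ‖Complex.exp (Complex.I * s * (u:ℂ)^2)‖ = 1 := by
  have : Complex.I * s * (u:ℂ)^2 = Complex.I * ((s * u^2 : ℝ) : ℂ) := by push_cast; ring
  rw [this]; exact KDB_norm_exp_mul_I _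

lemma KDB_cont_exp_quad (s : ℝ) :
    Continuous (fun u : ℝ => Complex.exp (Complex.I * s * (u:ℂ)^2)) := by
  fun_prop

lemma KDB_fresnel_nonneg (s : ℝ) (hs : |s| = 1) (X : ℝ) (hX : 0 ≤ X) :
    ‖∫ u in (0:ℝ)..X, Complex.exp (Complex.I * s * (u:ℂ)^2)‖ ≤ 5/2 := by
  have hs0 : s ≠ 0 := by intro h; simp [h] at hs
  have hsC : (s:ℂ) ≠ 0 := by exact_mod_cast hs0
  have cont := KDB_cont_exp_quad s
  by_cases hX1 : X ≤ 1
  · have := intervalIntegral.norm_integral_le_of_norm_le_const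
      (C := 1) (f := fun u : ℝ => Complex.exp (Complex.I * s * (u:ℂ)^2)) (a := 0) (b := X)
      (fun x _ => le_of_eq (KDB_norm_exp_quad s x))
    have : ‖∫ u in (0:ℝ)..X, Complex.exp (Complex.I * s * (u:ℂ)^2)‖ ≤ |X - 0| := by
      simpa using this
    rw [sub_zero, _root_.abs_of_nonneg hX] at this
    linarith
  · push_neg at hX1
    have h01 : (0:ℝ) ≤ 1 := zero_le_one
    -- split
    have hsplit : (∫ u in (0:ℝ)..X, Complex.exp (Complex.I * s * (u:ℂ)^2))
        = (∫ u in (0:ℝ)..1, Complex.exp (Complex.I * s * (u:ℂ)^2))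
          + ∫ u in (1:ℝ)..X, Complex.exp (Complex.I * s * (u:ℂ)^2) :=
      (intervalIntegral.integral_add_adjacent_intervals
        (cont.intervalIntegrable _ _) (cont.intervalIntegrable _ _)).symm
    -- first piece
    have hp1 : ‖∫ u in (0:ℝ)..1, Complex.exp (Complex.I * s * (u:ℂ)^2)‖ ≤ 1 := by
      have := intervalIntegral.norm_integral_le_of_norm_le_const
        (C := 1) (f := fun u : ℝ => Complex.exp (Complex.I * s * (u:ℂ)^2)) (a := 0) (b := 1)
        (fun x _ => le_of_eq (KDB_norm_exp_quad s x))
      simpa using this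
    -- second piece, by parts
    set P : ℝ → ℂ := fun u => Complex.exp (Complex.I * s * (u:ℂ)^2) / (2 * Complex.I * s * u) with hP
    have hIcc : Set.uIcc (1:ℝ) X = Set.Icc 1 X := Set.uIcc_of_le (le_of_lt hX1)
    have hderiv : ∀ u ∈ Set.uIcc (1:ℝ) X, HasDerivAt P
        (Complex.exp (Complex.I * s * (u:ℂ)^2)
          - Complex.exp (Complex.I * s * (u:ℂ)^2) / (2 * Complex.I * s * (u:ℂ)^2)) u := by
      intro u hu
      rw [hIcc] at hu
      have hu1 : (1:ℝ) ≤ u := hu.1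
      have hu0 : (u:ℂ) ≠ 0 := by exact_mod_cast (by linarith : u ≠ 0)
      -- numerator derivative
      have hnum : HasDerivAt (fun v : ℝ => Complex.exp (Complex.I * s * (v:ℂ)^2))
          (Complex.exp (Complex.I * s * (u:ℂ)^2) * (Complex.I * s * (2*u))) u := by
        have hinner : HasDerivAt (fun v : ℝ => Complex.I * s * (v:ℂ)^2)
            (Complex.I * s * (2*u)) u := by
          have h1 : HasDerivAt (fun v : ℝ => ((v:ℂ)^2)) (2*(u:ℂ)) u := by
            have := (hasDerivAt_pow 2 (u:ℂ)).comp_ofReal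
            simpa using this
          simpa [mul_comm, mul_assoc, mul_left_comm] using h1.const_mul (Complex.I * s)
        simpa using hinner.cexp
      have hden : HasDerivAt (fun v : ℝ => 2 * Complex.I * s * (v:ℂ))
          (2 * Complex.I * s) u := by
        have h1 : HasDerivAt (fun v : ℝ => ((v:ℂ))) 1 u := by
          simpa using (hasDerivAt_id (u:ℂ)).comp_ofReal
        simpa using h1.const_mul (2 * Complex.I * s)
      have hden0 : 2 * Complex.I * s * (u:ℂ) ≠ 0 := by
        simp [Complex.I_ne_zero, hsC, hu0]
      have := hnum.div hden hden0
      refine this.congr_deriv ?_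
      field_simp
    have hint2 : IntervalIntegrable (fun u : ℝ =>
        Complex.exp (Complex.I * s * (u:ℂ)^2) / (2 * Complex.I * s * (u:ℂ)^2)) volume 1 X := by
      apply ContinuousOn.intervalIntegrable
      apply ContinuousOn.div (cont.continuousOn)
      · fun_prop
      · intro u hu
        rw [hIcc] at hu
        have : (u:ℂ) ≠ 0 := by exact_mod_cast (by linarith [hu.1] : u ≠ 0)
        simp [Complex.I_ne_zero, hsC, this]
    have hftc : (∫ u in (1:ℝ)..X, (Complex.exp (Complex.I * s * (u:ℂ)^2)
          - Complex.exp (Complex.I * s * (u:ℂ)^2) / (2 * Complex.I * s * (u:ℂ)^2)))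
        = P X - P 1 := by
      apply intervalIntegral.integral_eq_sub_of_hasDerivAt hderiv
      exact ((cont.intervalIntegrable _ _).sub hint2)
    have hsplit2 : (∫ u in (1:ℝ)..X, Complex.exp (Complex.I * s * (u:ℂ)^2))
        = (P X - P 1) + ∫ u in (1:ℝ)..X,
            Complex.exp (Complex.I * s * (u:ℂ)^2) / (2 * Complex.I * s * (u:ℂ)^2) := by
      rw [← hftc, ← intervalIntegral.integral_add ((cont.intervalIntegrable _ _).sub hint2) hint2]
      simp
    -- norms
    have hPnorm : ∀ u : ℝ, 1 ≤ u → ‖P u‖ ≤ 1/2 := by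
      intro u hu
      rw [hP]
      simp only [norm_div, norm_mul, KDB_norm_exp_quad]
      rw [Complex.norm_I]
      simp only [Complex.norm_real, Complex.norm_ofNat]
      rw [Real.norm_eq_abs, Real.norm_eq_abs, hs, _root_.abs_of_nonneg (by linarith : (0:ℝ) ≤ u)]
      rw [show (2:ℝ)*1*1*u = 2*u by ring, one_div]
      have h2u : (2:ℝ) ≤ 2*u := by linarith
      calc (2*u)⁻¹ ≤ (2:ℝ)⁻¹ := by
            apply inv_anti₀ (by norm_num) h2u
        _ = 1/2 := by norm_num
    have htail : ‖∫ u in (1:ℝ)..X, Complex.exp (Complex.I * s * (u:ℂ)^2)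
        / (2 * Complex.I * s * (u:ℂ)^2)‖ ≤ 1/2 := by
      have hbound : ∀ᵐ u : ℝ ∂(volume.restrict (Set.uIoc (1:ℝ) X)),
          ‖Complex.exp (Complex.I * s * (u:ℂ)^2) / (2 * Complex.I * s * (u:ℂ)^2)‖
            ≤ 1/(2*u^2) := by
        filter_upwards [MeasureTheory.ae_restrict_mem measurableSet_uIoc] with u hu
        rw [Set.uIoc_of_le (le_of_lt hX1)] at hu
        have hu1 : (1:ℝ) < u := hu.1
        simp only [norm_div, norm_mul, KDB_norm_exp_quad]
        rw [Complex.norm_I]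
        simp only [Complex.norm_real, Complex.norm_ofNat, norm_pow]
        rw [Real.norm_eq_abs, Real.norm_eq_abs, hs, _root_.sq_abs]
        rw [show (2:ℝ)*1*1*u^2 = 2*u^2 by ring]
      have hg : IntervalIntegrable (fun u : ℝ => 1/(2*u^2)) volume 1 X := by
        apply ContinuousOn.intervalIntegrable
        apply ContinuousOn.div continuousOn_const (by fun_prop)
        intro u hu
        rw [hIcc] at hu
        nlinarith [hu.1]
      have hle := intervalIntegral.norm_integral_le_abs_of_norm_le hbound hg
      refine le_trans hle ?_
      have hval : (∫ u in (1:ℝ)..X, 1/(2*u^2)) = 1/2 - 1/(2*X) := by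
        have hd : ∀ u ∈ Set.uIcc (1:ℝ) X,
            HasDerivAt (fun v : ℝ => -((2*v)⁻¹)) (1/(2*u^2)) u := by
          intro u hu
          rw [hIcc] at hu
          have hu1 : (1:ℝ) ≤ u := hu.1
          have hlin : HasDerivAt (fun v : ℝ => 2*v) 2 u := by
            simpa using (hasDerivAt_id u).const_mul (2:ℝ)
          have h2u0 : (2:ℝ)*u ≠ 0 := by positivity
          have := (hlin.inv h2u0).neg
          refine this.congr_deriv ?_
          field_simp
        rw [intervalIntegral.integral_eq_sub_of_hasDerivAt hd hg]
        field_simp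
        ring
      have hXpos : (0:ℝ) < X := by linarith
      have h1 : 1/(2*X) ≤ 1/2 := by
        apply one_div_le_one_div_of_le (by norm_num) (by linarith)
      have hx2 : (0:ℝ) ≤ 1/2 - 1/(2*X) := by linarith
      rw [hval, _root_.abs_of_nonneg hx2]
      have : (0:ℝ) < 1/(2*X) := by positivity
      linarith
    -- combine
    rw [hsplit, hsplit2]
    calc ‖(∫ u in (0:ℝ)..1, Complex.exp (Complex.I * s * (u:ℂ)^2))
          + (P X - P 1 + ∫ u in (1:ℝ)..X,
              Complex.exp (Complex.I * s * (u:ℂ)^2) / (2 * Complex.I * s * (u:ℂ)^2))‖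
        ≤ ‖∫ u in (0:ℝ)..1, Complex.exp (Complex.I * s * (u:ℂ)^2)‖
          + (‖P X‖ + ‖P 1‖ + ‖∫ u in (1:ℝ)..X,
              Complex.exp (Complex.I * s * (u:ℂ)^2) / (2 * Complex.I * s * (u:ℂ)^2)‖) := by
          refine le_trans (norm_add_le _ _) ?_
          gcongr
          refine le_trans (norm_add_le _ _) ?_
          gcongr
          exact norm_sub_le _ _
      _ ≤ 1 + (1/2 + 1/2 + 1/2) := by
          gcongr <;> first
            | exact hp1
            | exact hPnorm X (le_of_lt hX1)
            | exact hPnorm 1 le_rfl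
            | exact htail
      _ = 5/2 := by norm_num


lemma KDB_fresnel_all (s : ℝ) (hs : |s| = 1) (a b : ℝ) :
    ‖∫ u in a..b, Complex.exp (Complex.I * s * (u:ℂ)^2)‖ ≤ 5 := by
  have cont := KDB_cont_exp_quad s
  have key : ∀ c : ℝ, ‖∫ u in (0:ℝ)..c, Complex.exp (Complex.I * s * (u:ℂ)^2)‖ ≤ 5/2 := by
    intro c
    rcases le_or_gt 0 c with h|h
    · exact KDB_fresnel_nonneg s hs c h
    · have heven : (∫ u in (0:ℝ)..(-c), Complex.exp (Complex.I * s * (u:ℂ)^2))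
          = ∫ u in c..(0:ℝ), Complex.exp (Complex.I * s * (u:ℂ)^2) := by
        have hcn := intervalIntegral.integral_comp_neg (a := (0:ℝ)) (b := -c)
          (f := fun u : ℝ => Complex.exp (Complex.I * s * (u:ℂ)^2))
        rw [neg_neg, neg_zero] at hcn
        rw [← hcn]
        apply intervalIntegral.integral_congr
        intro u _
        simp only
        push_cast
        ring_nf
      have hsym : (∫ u in (0:ℝ)..c, Complex.exp (Complex.I * s * (u:ℂ)^2))
          = -∫ u in c..(0:ℝ), Complex.exp (Complex.I * s * (u:ℂ)^2) :=
        intervalIntegral.integral_symm c 0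
      rw [hsym, norm_neg, ← heven]
      exact KDB_fresnel_nonneg s hs (-c) (by linarith)
  have hsplit : (∫ u in a..b, Complex.exp (Complex.I * s * (u:ℂ)^2))
      = (∫ u in a..(0:ℝ), Complex.exp (Complex.I * s * (u:ℂ)^2))
        + ∫ u in (0:ℝ)..b, Complex.exp (Complex.I * s * (u:ℂ)^2) :=
    (intervalIntegral.integral_add_adjacent_intervals
      (cont.intervalIntegrable _ _) (cont.intervalIntegrable _ _)).symm
  rw [hsplit]
  have h1 : ‖∫ u in a..(0:ℝ), Complex.exp (Complex.I * s * (u:ℂ)^2)‖ ≤ 5/2 := by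
    rw [intervalIntegral.integral_symm 0 a, norm_neg]
    exact key a
  refine le_trans (norm_add_le _ _) ?_
  linarith [key b]

lemma KDB_quad_phase (t x a b : ℝ) (ht : t ≠ 0) :
    ‖∫ ξ in a..b, Complex.exp (Complex.I * ((x*ξ + t*ξ^2 : ℝ):ℂ))‖ ≤ 5 / Real.sqrt |t| := by
  have habs : (0:ℝ) < |t| := abs_pos.mpr ht
  set c := x/(2*t) with hc
  set r := Real.sqrt |t| with hrdef
  have hr : 0 < r := Real.sqrt_pos.mpr habs
  have hr2 : r^2 = |t| := Real.sq_sqrt habs.le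
  set s := t/|t| with hsdef
  have hs : |s| = 1 := by rw [hsdef, abs_div, _root_.abs_abs, div_self habs.ne']
  have hreal : ∀ ξ : ℝ, x*ξ + t*ξ^2 = -(x^2/(4*t)) + s * (r*(ξ+c))^2 := by
    intro ξ
    have h1 : s * (r*(ξ+c))^2 = t * (ξ+c)^2 := by
      rw [mul_pow, hr2, hsdef]
      field_simp
    rw [h1, hc]
    field_simp
    ring
  have hpt : ∀ ξ : ℝ, Complex.exp (Complex.I * ((x*ξ + t*ξ^2 : ℝ):ℂ))
      = Complex.exp (Complex.I * ((-(x^2/(4*t)) : ℝ):ℂ))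
        * Complex.exp (Complex.I * s * ((r*(ξ+c) : ℝ):ℂ)^2) := by
    intro ξ
    rw [← Complex.exp_add, hreal ξ]
    congr 1
    push_cast
    ring
  rw [intervalIntegral.integral_congr (g := fun ξ : ℝ =>
      Complex.exp (Complex.I * ((-(x^2/(4*t)) : ℝ):ℂ))
        * Complex.exp (Complex.I * s * ((r*(ξ+c) : ℝ):ℂ)^2)) (fun ξ _ => hpt ξ)]
  rw [intervalIntegral.integral_const_mul]
  rw [norm_mul, KDB_norm_exp_mul_I, one_mul]
  have hshift : (∫ ξ in a..b, Complex.exp (Complex.I * s * ((r*(ξ+c) : ℝ):ℂ)^2))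
      = ∫ ξ in (a+c)..(b+c), Complex.exp (Complex.I * s * ((r*ξ : ℝ):ℂ)^2) := by
    exact intervalIntegral.integral_comp_add_right
      (fun ξ : ℝ => Complex.exp (Complex.I * s * ((r*ξ : ℝ):ℂ)^2)) c
  rw [hshift]
  have hscale : (∫ ξ in (a+c)..(b+c), Complex.exp (Complex.I * s * ((r*ξ : ℝ):ℂ)^2))
      = r⁻¹ • ∫ u in (r*(a+c))..(r*(b+c)), Complex.exp (Complex.I * s * ((u : ℝ):ℂ)^2) := by
    exact intervalIntegral.integral_comp_mul_left
      (fun u : ℝ => Complex.exp (Complex.I * s * ((u : ℝ):ℂ)^2)) hr.ne'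
  rw [hscale, norm_smul, Real.norm_eq_abs, _root_.abs_of_nonneg (inv_nonneg.mpr hr.le)]
  have := KDB_fresnel_all s hs (r*(a+c)) (r*(b+c))
  rw [div_eq_inv_mul]
  exact mul_le_mul_of_nonneg_left this (inv_nonneg.mpr hr.le)

lemma KDB_osc1d (ψ : ℝ → ℝ) (hψ : ContDiff ℝ (⊤:ℕ∞) ψ) (hsupp : ∀ u : ℝ, 2 ≤ |u| → ψ u = 0)
    (D : ℝ) (hD : ∀ u, |deriv ψ u| ≤ D) (N : ℝ) (hN : 1 ≤ N) (t x : ℝ) (ht : t ≠ 0) :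
    ‖∫ s : ℝ, ((ψ (s/N) : ℝ) : ℂ) * Complex.exp (Complex.I * ((x*s + t*s^2 : ℝ):ℂ))‖
      ≤ 30 * D / Real.sqrt |t| := by
  have hN0 : (0:ℝ) < N := lt_of_lt_of_le one_pos hN
  have hD0 : 0 ≤ D := le_trans (abs_nonneg _) (hD 0)
  have habs : (0:ℝ) < |t| := abs_pos.mpr ht
  set S := Real.sqrt |t| with hSdef
  have hS : 0 < S := Real.sqrt_pos.mpr habs
  set b : ℝ := 2*N + 1 with hb
  have hbpos : (0:ℝ) < b := by rw [hb]; linarith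
  set E : ℝ → ℂ := fun ξ => Complex.exp (Complex.I * ((x*ξ + t*ξ^2 : ℝ):ℂ)) with hE
  have hEcont : Continuous E := by
    rw [hE]; fun_prop
  set f : ℝ → ℂ := fun s => ((ψ (s/N) : ℝ) : ℂ) * E s with hf
  have hψcont : Continuous ψ := hψ.continuous
  have hψzero : ∀ s : ℝ, b ≤ |s| → ψ (s/N) = 0 := by
    intro s hs
    apply hsupp
    rw [abs_div, _root_.abs_of_pos hN0, le_div_iff₀ hN0]
    rw [hb] at hs
    linarith
  have hsup : Function.support f ⊆ Set.Ioc (-b) b := by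
    intro s hs
    by_contra hmem
    apply hs
    have habs2 : b ≤ |s| := by
      simp only [Set.mem_Ioc, not_and_or, not_lt, not_le] at hmem
      rcases hmem with h | h
      · rw [abs_of_nonpos (by linarith : s ≤ 0)]; linarith
      · rw [_root_.abs_of_nonneg (by linarith : 0 ≤ s)]; linarith
    simp [hf, hψzero s habs2]
  have hint : (∫ s : ℝ, f s) = ∫ s in (-b)..b, f s :=
    (intervalIntegral.integral_eq_integral_of_support_subset hsup).symm
  set u : ℝ → ℂ := fun s => ((ψ (s/N) : ℝ) : ℂ) with hu_def
  set u' : ℝ → ℂ := fun s => ((deriv ψ (s/N) / N : ℝ) : ℂ) with hu'_def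
  set v : ℝ → ℂ := fun s => ∫ ξ in (-b)..s, E ξ with hv_def
  have hu : ∀ s ∈ Set.uIcc (-b) b, HasDerivAt u (u' s) s := by
    intro s _
    have h1 : HasDerivAt (fun y : ℝ => y / N) (1/N) s := by
      simpa using (hasDerivAt_id s).div_const N
    have h2 : HasDerivAt ψ (deriv ψ (s/N)) (s/N) :=
      (hψ.differentiable (by simp) (s/N)).hasDerivAt
    have h3 := h2.comp s h1
    have h4 := h3.ofReal_comp
    simpa [hu_def, hu'_def, div_eq_mul_inv, mul_one_div] using h4
  have hv : ∀ s ∈ Set.uIcc (-b) b, HasDerivAt v (E s) s := by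
    intro s _
    exact intervalIntegral.integral_hasDerivAt_right (hEcont.intervalIntegrable _ _)
      (hEcont.stronglyMeasurable.stronglyMeasurableAtFilter) hEcont.continuousAt
  have hu'cont : Continuous u' := by
    have hd := hψ.continuous_deriv (mod_cast le_top)
    rw [hu'_def]
    exact Complex.continuous_ofReal.comp ((hd.comp (continuous_id.div_const N)).div_const N)
  have hibp := intervalIntegral.integral_mul_deriv_eq_deriv_mul hu hv
    (hu'cont.intervalIntegrable _ _) (hEcont.intervalIntegrable _ _)
  have hub : u b = 0 := by
    have : ψ (b/N) = 0 := by
      apply hsupp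
      rw [abs_div, _root_.abs_of_pos hN0, le_div_iff₀ hN0, _root_.abs_of_nonneg (by linarith : (0:ℝ) ≤ b), hb]
      linarith
    simp [hu_def, this]
  have hunb : u (-b) = 0 := by
    have : ψ ((-b)/N) = 0 := by
      apply hsupp
      rw [abs_div, _root_.abs_of_pos hN0, le_div_iff₀ hN0, abs_neg,
        _root_.abs_of_nonneg (by linarith : (0:ℝ) ≤ b), hb]
      linarith
    simp [hu_def, this]
  have hbd : ∀ ξ ∈ Set.uIoc (-b) b, ‖u' ξ * v ξ‖ ≤ (D/N) * (5/S) := by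
    intro ξ _
    rw [norm_mul]
    have h1 : ‖u' ξ‖ ≤ D/N := by
      rw [hu'_def]
      simp only [Complex.norm_real, Real.norm_eq_abs]
      rw [abs_div, _root_.abs_of_pos hN0]
      gcongr
      exact hD _
    have h2 : ‖v ξ‖ ≤ 5/S := KDB_quad_phase t x (-b) ξ ht
    exact mul_le_mul h1 h2 (norm_nonneg _) (by positivity)
  have hnorm := intervalIntegral.norm_integral_le_of_norm_le_const hbd
  rw [hint]
  have hfix : ∀ s : ℝ, f s = u s * E s := fun s => rfl
  rw [intervalIntegral.integral_congr (g := fun s => u s * E s) (fun s _ => hfix s)]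
  rw [hibp, hub, hunb]
  simp only [zero_mul, sub_zero, zero_sub, norm_neg]
  refine le_trans hnorm ?_
  have habs3 : |b - -b| = 2*b := by
    rw [sub_neg_eq_add, _root_.abs_of_nonneg (by linarith : (0:ℝ) ≤ b + b)]
    ring
  rw [habs3, hb]
  have hkey : D/N * (5/S) * (2*(2*N+1)) = (10*D*(2*N+1)/N)/S := by
    field_simp
    ring
  rw [hkey, div_le_div_iff₀ (by positivity) (by positivity)]
  have h6 : 10*D*(2*N+1)/N ≤ 30*D := by
    rw [div_le_iff₀ hN0]
    nlinarith
  nlinarith [mul_le_mul_of_nonneg_right h6 hS.le]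




def KDB_schwartz (f : ℝ → ℂ) (hsm : ContDiff ℝ (⊤:ℕ∞) f) (hc : HasCompactSupport f) :
    SchwartzMap ℝ ℂ where
  toFun := f
  smooth' := by exact_mod_cast hsm
  decay' := by
    intro k n
    have h1 : Continuous fun x : ℝ => ‖x‖^k * ‖iteratedFDeriv ℝ n f x‖ := by
      apply Continuous.mul (by fun_prop)
      exact (hsm.continuous_iteratedFDeriv (mod_cast le_top)).norm
    have h2 : HasCompactSupport fun x : ℝ => ‖x‖^k * ‖iteratedFDeriv ℝ n f x‖ := by
      apply HasCompactSupport.mul_left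
      exact (hc.iteratedFDeriv n).norm
    obtain ⟨C, hC⟩ := h1.bounded_above_of_compact_support h2
    refine ⟨C, fun x => ?_⟩
    have := hC x
    rwa [Real.norm_eq_abs, _root_.abs_of_nonneg (by positivity)] at this

lemma KDB_inversion (g : ℝ → ℂ) (hsm : ContDiff ℝ (⊤:ℕ∞) g) (hcs : HasCompactSupport g) (x₀ : ℝ) :
    (∫ s : ℝ, (∫ η : ℝ, g η * Complex.exp (Complex.I * ((s*η : ℝ):ℂ)))
        * Complex.exp (-Complex.I * ((s*x₀ : ℝ):ℂ)))
      = 2 * Real.pi * g x₀ := by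
  have hπ : (0:ℝ) < 2*Real.pi := by positivity
  set gS := KDB_schwartz g hsm hcs with hgS
  have hgi : Integrable g := gS.integrable
  have hFg : Integrable (FourierTransform.fourier g) := by
    have := (SchwartzMap.fourierTransformCLM ℂ gS).integrable (μ := volume)
    rwa [SchwartzMap.fourierTransformCLM_apply, SchwartzMap.fourier_coe] at this
  -- the inner integral is 𝓕⁻ g at (2π)⁻¹ s
  have hstep1 : ∀ s : ℝ, (∫ η : ℝ, g η * Complex.exp (Complex.I * ((s*η : ℝ):ℂ)))
      = FourierTransformInv.fourierInv g ((2*Real.pi)⁻¹ * s) := by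
    intro s
    rw [Real.fourierInv_eq_fourier_neg,
      Real.fourier_real_eq_integral_exp_smul]
    apply MeasureTheory.integral_congr_ae
    apply Filter.Eventually.of_forall
    intro η
    simp only [smul_eq_mul]
    rw [mul_comm]
    congr 1
    congr 1
    push_cast
    have : -2 * (Real.pi:ℂ) * η * (-((2*Real.pi:ℝ)⁻¹ * s)) = s * η := by
      have h2 : ((2*Real.pi:ℝ):ℂ) ≠ 0 := by exact_mod_cast hπ.ne'
      push_cast at h2 ⊢
      field_simp
    rw [← this]
    push_cast
    ring
  have hstep2 : (∫ s : ℝ, FourierTransformInv.fourierInv g ((2*Real.pi)⁻¹ * s)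
        * Complex.exp (-Complex.I * ((s*x₀ : ℝ):ℂ)))
      = (2*Real.pi) • ∫ u : ℝ, FourierTransformInv.fourierInv g u
          * Complex.exp (-Complex.I * (((2*Real.pi*u)*x₀ : ℝ):ℂ)) := by
    have := MeasureTheory.Measure.integral_comp_mul_left
      (g := fun u : ℝ => FourierTransformInv.fourierInv g u
        * Complex.exp (-Complex.I * (((2*Real.pi*u)*x₀ : ℝ):ℂ))) ((2*Real.pi)⁻¹)
    rw [show |(2*Real.pi)⁻¹⁻¹| = 2*Real.pi by rw [inv_inv, _root_.abs_of_pos hπ]] at this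
    rw [← this]
    apply MeasureTheory.integral_congr_ae
    apply Filter.Eventually.of_forall
    intro s
    simp only
    congr 2
    push_cast
    have h2 : ((Real.pi:ℂ)) ≠ 0 := by exact_mod_cast Real.pi_ne_zero
    field_simp
  have hstep3 : (∫ u : ℝ, FourierTransformInv.fourierInv g u
        * Complex.exp (-Complex.I * (((2*Real.pi*u)*x₀ : ℝ):ℂ)))
      = FourierTransform.fourier (FourierTransformInv.fourierInv g) x₀ := by
    rw [Real.fourier_real_eq_integral_exp_smul]
    apply MeasureTheory.integral_congr_ae
    apply Filter.Eventually.of_forall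
    intro u
    simp only [smul_eq_mul]
    rw [mul_comm]
    congr 1
    push_cast
    ring
  have hstep4 : FourierTransform.fourier (FourierTransformInv.fourierInv g) x₀ = g x₀ := by
    have := MeasureTheory.Integrable.fourier_fourierInv_eq hgi hFg
      (hsm.continuous.continuousAt (x := x₀))
    exact this
  calc (∫ s : ℝ, (∫ η : ℝ, g η * Complex.exp (Complex.I * ((s*η : ℝ):ℂ)))
        * Complex.exp (-Complex.I * ((s*x₀ : ℝ):ℂ)))
      = ∫ s : ℝ, FourierTransformInv.fourierInv g ((2*Real.pi)⁻¹ * s)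
          * Complex.exp (-Complex.I * ((s*x₀ : ℝ):ℂ)) := by
        apply MeasureTheory.integral_congr_ae
        filter_upwards with s
        beta_reduce
        rw [hstep1 s]
    _ = (2*Real.pi) • ∫ u : ℝ, FourierTransformInv.fourierInv g u
          * Complex.exp (-Complex.I * (((2*Real.pi*u)*x₀ : ℝ):ℂ)) := hstep2
    _ = (2*Real.pi) • (g x₀) := by rw [hstep3, hstep4]
    _ = 2 * Real.pi * g x₀ := by
        rw [real_smul]
        push_cast
        ring




lemma KDB_psi_zero (φ1 : ℝ → ℝ) (h0 : ∀ x : ℝ, 2 ≤ |x| → φ1 x = 0) (j : ℕ) (k : ℤ)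
    (hk : k ∉ Finset.Icc (-(2^(j+1):ℤ)) (2^(j+1))) : φ1 ((k:ℝ)/(2:ℝ)^j) = 0 := by
  apply h0
  have hN : (0:ℝ) < (2:ℝ)^j := by positivity
  rw [abs_div, _root_.abs_of_pos hN, le_div_iff₀ hN]
  simp only [Finset.mem_Icc, not_and_or, not_le] at hk
  rcases hk with h|h
  · have h1 : (k:ℝ) < -(2*(2:ℝ)^j) := by
      have h2 : ((k:ℝ)) < ((-(2^(j+1)):ℤ) : ℝ) := by exact_mod_cast h
      push_cast at h2
      rw [pow_succ] at h2
      linarith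
    rw [abs_of_nonpos (by nlinarith : (k:ℝ) ≤ 0)]
    linarith
  · have h1 : (2*(2:ℝ)^j) < (k:ℝ) := by
      have h2 : (((2^(j+1):ℤ)) : ℝ) < ((k:ℝ)) := by exact_mod_cast h
      push_cast at h2
      rw [pow_succ] at h2
      linarith
    rw [_root_.abs_of_nonneg (by nlinarith : (0:ℝ) ≤ (k:ℝ))]
    linarith

lemma KDB_tsum_fin (φ1 : ℝ → ℝ) (h0 : ∀ x : ℝ, 2 ≤ |x| → φ1 x = 0) (j : ℕ) (c : ℤ → ℂ) :
    (∑' k : ℤ, ((φ1 ((k:ℝ)/(2:ℝ)^j) ^ 2 : ℝ):ℂ) * c k)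
      = ∑ k ∈ Finset.Icc (-(2^(j+1):ℤ)) (2^(j+1)),
          ((φ1 ((k:ℝ)/(2:ℝ)^j) ^ 2 : ℝ):ℂ) * c k := by
  apply tsum_eq_sum
  intro k hk
  rw [KDB_psi_zero φ1 h0 j k hk]
  simp

lemma KDB_kn_factor (φ1 : ℝ → ℝ) (N T : ℝ) (x : Fin 3 → ℝ) :
    (∫ ξ : Fin 3 → ℝ, ((∏ i, φ1 (ξ i / N) ^ 2 : ℝ) : ℂ) *
        Complex.exp (Complex.I * (((∑ i, x i * ξ i) + T * (∑ i, ξ i ^ 2) : ℝ) : ℂ)))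
      = ∏ i : Fin 3, ∫ s : ℝ, ((φ1 (s / N) ^ 2 : ℝ) : ℂ) *
          Complex.exp (Complex.I * ((x i * s + T * s ^ 2 : ℝ) : ℂ)) := by
  rw [← MeasureTheory.integral_fintype_prod_volume_eq_prod
    (f := fun i (s : ℝ) => ((φ1 (s / N) ^ 2 : ℝ) : ℂ) *
      Complex.exp (Complex.I * ((x i * s + T * s ^ 2 : ℝ) : ℂ)))]
  apply MeasureTheory.integral_congr_ae
  filter_upwards with ξ
  rw [Finset.prod_mul_distrib]
  congr 1
  · push_cast
    rfl
  · rw [← Complex.exp_sum]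
    congr 1
    rw [← Finset.mul_sum]
    congr 1
    push_cast
    rw [Finset.mul_sum, ← Finset.sum_add_distrib]

lemma KDB_orth (m : ℤ) : (∫ y in Set.Ioc (0:ℝ) (2*Real.pi),
      Complex.exp (Complex.I * ((y * (m:ℝ) : ℝ):ℂ)))
    = if m = 0 then (((2*Real.pi : ℝ)):ℂ) else 0 := by
  rw [← intervalIntegral.integral_of_le (by positivity : (0:ℝ) ≤ 2*Real.pi)]
  by_cases hm : m = 0
  · simp [hm]
  · have hmC : ((m:ℝ):ℂ) ≠ 0 := by
      simp only [ne_eq, Complex.ofReal_eq_zero]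
      exact_mod_cast hm
    have hc : Complex.I * ((m:ℝ):ℂ) ≠ 0 := mul_ne_zero Complex.I_ne_zero hmC
    have hcongr : ∀ y ∈ Set.uIcc (0:ℝ) (2*Real.pi),
        Complex.exp (Complex.I * ((y * (m:ℝ) : ℝ):ℂ))
          = Complex.exp ((Complex.I * ((m:ℝ):ℂ)) * (y:ℂ)) := by
      intro y _
      congr 1
      push_cast
      ring
    rw [intervalIntegral.integral_congr hcongr, integral_exp_mul_complex hc]
    have h1 : Complex.exp ((Complex.I * ((m:ℝ):ℂ)) * (((2*Real.pi : ℝ)):ℂ)) = 1 := by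
      have := Complex.exp_int_mul_two_pi_mul_I m
      rw [← this]
      congr 1
      push_cast
      ring
    rw [h1]
    simp [hm]

lemma KDB_circle (φ1 : ℝ → ℝ) (hc : Continuous φ1) (h0 : ∀ x : ℝ, 2 ≤ |x| → φ1 x = 0)
    (j : ℕ) (T t τ : ℝ) (k : ℤ) :
    (∫ y in Set.Ioc (0:ℝ) (2*Real.pi),
        (∑' k' : ℤ, ((φ1 ((k':ℝ)/(2:ℝ)^j) ^ 2 : ℝ):ℂ)
          * Complex.exp (Complex.I * ((y*(k':ℝ) + T*(k':ℝ)^2 : ℝ):ℂ)))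
        * Complex.exp (-Complex.I * ((y*(k:ℝ) + t*τ : ℝ):ℂ)))
      = Complex.exp (-Complex.I * ((t*τ : ℝ):ℂ)) * (((2*Real.pi : ℝ)):ℂ)
          * ((φ1 ((k:ℝ)/(2:ℝ)^j) ^ 2 : ℝ):ℂ)
          * Complex.exp (Complex.I * ((T*(k:ℝ)^2 : ℝ):ℂ)) := by
  set F := Finset.Icc (-(2^(j+1):ℤ)) (2^(j+1)) with hF
  have hrw : (fun y : ℝ => (∑' k' : ℤ, ((φ1 ((k':ℝ)/(2:ℝ)^j) ^ 2 : ℝ):ℂ)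
          * Complex.exp (Complex.I * ((y*(k':ℝ) + T*(k':ℝ)^2 : ℝ):ℂ)))
        * Complex.exp (-Complex.I * ((y*(k:ℝ) + t*τ : ℝ):ℂ)))
      = fun y : ℝ => ∑ k' ∈ F,
          (Complex.exp (-Complex.I * ((t*τ : ℝ):ℂ)) * ((φ1 ((k':ℝ)/(2:ℝ)^j) ^ 2 : ℝ):ℂ)
            * Complex.exp (Complex.I * ((T*(k':ℝ)^2 : ℝ):ℂ)))
          * Complex.exp (Complex.I * ((y*(((k' - k : ℤ)):ℝ) : ℝ):ℂ)) := by
    funext y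
    rw [KDB_tsum_fin φ1 h0 j
      (fun k' => Complex.exp (Complex.I * ((y*(k':ℝ) + T*(k':ℝ)^2 : ℝ):ℂ))), Finset.sum_mul]
    apply Finset.sum_congr rfl
    intro k' _
    rw [mul_assoc, mul_assoc, mul_assoc]
    rw [mul_comm (Complex.exp (-Complex.I * ((t*τ : ℝ):ℂ))) _, mul_assoc]
    congr 1
    rw [← Complex.exp_add, ← Complex.exp_add, ← Complex.exp_add]
    congr 1
    push_cast
    ring
  rw [hrw, MeasureTheory.integral_finset_sum]
  · have hterm : ∀ k' ∈ F,
        (∫ y in Set.Ioc (0:ℝ) (2*Real.pi),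
          (Complex.exp (-Complex.I * ((t*τ : ℝ):ℂ)) * ((φ1 ((k':ℝ)/(2:ℝ)^j) ^ 2 : ℝ):ℂ)
            * Complex.exp (Complex.I * ((T*(k':ℝ)^2 : ℝ):ℂ)))
          * Complex.exp (Complex.I * ((y*(((k' - k : ℤ)):ℝ) : ℝ):ℂ)))
        = if k' = k then Complex.exp (-Complex.I * ((t*τ : ℝ):ℂ)) * (((2*Real.pi : ℝ)):ℂ)
              * ((φ1 ((k:ℝ)/(2:ℝ)^j) ^ 2 : ℝ):ℂ)
              * Complex.exp (Complex.I * ((T*(k:ℝ)^2 : ℝ):ℂ)) else 0 := by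
      intro k' _
      rw [MeasureTheory.integral_const_mul, KDB_orth (k' - k)]
      by_cases hkk : k' = k
      · subst hkk
        simp only [sub_self]
        norm_num
        ring
      · rw [if_neg (by simpa [sub_eq_zero] using hkk), if_neg hkk, mul_zero]
    rw [Finset.sum_congr rfl hterm, Finset.sum_ite_eq' F k]
    by_cases hkF : k ∈ F
    · rw [if_pos hkF]
    · rw [if_neg hkF, KDB_psi_zero φ1 h0 j k hkF]
      push_cast
      ring
  · intro k' _
    apply Continuous.integrableOn_Ioc
    fun_prop


end
end KDBAux

/-- `L^∞` dispersive bound for the time-translated frequency-localized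
Schrödinger kernel `K_{N,γ}(x,y,t) = K_N(x,y,2πγ + t)` on `ℝ³ × 𝕋`: for `|γ| ≥ 3`,
`‖K_{N,γ}‖_{L^∞_{x,y,t}} ≲ |γ|^{-3/2} N`, and `‖F_{x,y,t} K_{N,γ}‖_{L^∞_{ξ,k,τ}} ≲ 1`. -/
theorem kernel_dispersive_bounds_R3T (φ1 : ℝ → ℝ) (hs : ContDiff ℝ (⊤ : ℕ∞) φ1)
    (h1 : ∀ x : ℝ, |x| ≤ 1 → φ1 x = 1) (h0 : ∀ x : ℝ, 2 ≤ |x| → φ1 x = 0) :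
    ∃ C : ℝ, 0 < C ∧ ∀ (j : ℕ) (γ : ℤ), 3 ≤ |γ| →
      (∀ (x : Fin 3 → ℝ) (y t : ℝ), |t| ≤ 2*Real.pi →
        ‖KN φ1 ((2:ℝ)^j) x y (2*Real.pi*(γ:ℝ) + t)‖ ≤
          C * |(γ:ℝ)| ^ (-(3:ℝ)/2) * (2:ℝ)^j) ∧
      (∀ (ξ : Fin 3 → ℝ) (k : ℤ) (τ : ℝ),
        ‖stFT3 (fun x y t => KN φ1 ((2:ℝ)^j) x y (2*Real.pi*(γ:ℝ) + t)) ξ k τ‖ ≤ C) := by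
  classical
  have hout : ∀ u : ℝ, u ∉ Set.Icc (-2:ℝ) 2 → 2 ≤ |u| := by
    intro u hu
    simp only [Set.mem_Icc, not_and_or, not_le] at hu
    rcases hu with h|h
    · rw [abs_of_nonpos (by linarith)]; linarith
    · rw [_root_.abs_of_nonneg (by linarith)]; linarith
  have hφcs : HasCompactSupport φ1 :=
    HasCompactSupport.intro isCompact_Icc (fun u hu => h0 u (hout u hu))
  set ψ : ℝ → ℝ := fun u => φ1 u ^ 2 with hψdef
  have hψs : ContDiff ℝ (⊤:ℕ∞) ψ := hs.pow 2
  have hψ0 : ∀ u : ℝ, 2 ≤ |u| → ψ u = 0 := fun u hu => by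
    simp only [hψdef]; rw [h0 u hu]; norm_num
  have hψcs : HasCompactSupport ψ :=
    HasCompactSupport.intro isCompact_Icc (fun u hu => hψ0 u (hout u hu))
  obtain ⟨M₀, hM₀⟩ := hs.continuous.bounded_above_of_compact_support hφcs
  set M := max M₀ 1 with hM_def
  have hM1 : (1:ℝ) ≤ M := le_max_right _ _
  have hM : ∀ u, |φ1 u| ≤ M := fun u =>
    le_trans (by simpa [Real.norm_eq_abs] using hM₀ u) (le_max_left _ _)
  have hMψ : ∀ u : ℝ, |φ1 u ^ 2| ≤ M^2 := by
    intro u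
    rw [abs_pow]
    exact pow_le_pow_left₀ (abs_nonneg _) (hM u) 2
  obtain ⟨D₀, hD₀⟩ :=
    (hψs.continuous_deriv (mod_cast le_top)).bounded_above_of_compact_support hψcs.deriv
  set D := max D₀ 1 with hD_def
  have hD1 : (1:ℝ) ≤ D := le_max_right _ _
  have hD : ∀ u, |deriv ψ u| ≤ D := fun u =>
    le_trans (by simpa [Real.norm_eq_abs] using hD₀ u) (le_max_left _ _)
  set C1 : ℝ := (30*D)^3 * (5 * M^2) with hC1
  set C2 : ℝ := (2*Real.pi)^4 * M^8 * (4*Real.pi) with hC2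
  have hC1pos : 0 < C1 := by
    rw [hC1]
    have hD0 : (0:ℝ) < D := by linarith
    have hM0 : (0:ℝ) < M := by linarith
    positivity
  refine ⟨max C1 C2, lt_max_iff.mpr (Or.inl hC1pos), ?_⟩
  intro j γ hγ
  have hN1 : (1:ℝ) ≤ (2:ℝ)^j := by exact_mod_cast Nat.one_le_two_pow
  have hN0 : (0:ℝ) < (2:ℝ)^j := by positivity
  have hγ3 : (3:ℝ) ≤ |(γ:ℝ)| := by
    have h' : ((3:ℤ):ℝ) ≤ ((|γ|:ℤ):ℝ) := Int.cast_le.mpr hγ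
    push_cast at h'
    exact h'
  have hγ0 : (0:ℝ) < |(γ:ℝ)| := by linarith
  constructor
  · -- Part 1 : dispersive bound
    intro x y t' ht'
    set T : ℝ := 2*Real.pi*(γ:ℝ) + t' with hT_def
    have hpi := Real.pi_gt_three
    have hTγ : |(γ:ℝ)| ≤ |T| := by
      have h1' : |(2*Real.pi*(γ:ℝ))| ≤ |T| + |t'| := by
        have h3 : 2*Real.pi*(γ:ℝ) = T - t' := by rw [hT_def]; ring
        rw [h3]
        calc |T - t'| ≤ |T| + |-t'| := by rw [sub_eq_add_neg]; exact abs_add_le T (-t')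
          _ = |T| + |t'| := by rw [abs_neg]
      rw [abs_mul, _root_.abs_of_pos (by positivity : (0:ℝ) < 2*Real.pi)] at h1'
      nlinarith [abs_nonneg t', abs_nonneg T]
    have hT0 : T ≠ 0 := by
      intro h
      rw [h, abs_zero] at hTγ
      linarith
    rw [KN, norm_mul]
    have hA : ‖∫ ξ : Fin 3 → ℝ, ((∏ i, φ1 (ξ i / (2:ℝ)^j) ^ 2 : ℝ) : ℂ) *
        Complex.exp (Complex.I * (((∑ i, x i * ξ i) + T * (∑ i, ξ i ^ 2) : ℝ) : ℂ))‖
        ≤ (30*D)^3 * |(γ:ℝ)| ^ (-(3:ℝ)/2) := by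
      rw [KDB_kn_factor φ1 ((2:ℝ)^j) T x, norm_prod]
      have hone : ∀ i : Fin 3, ‖∫ s : ℝ, ((φ1 (s / (2:ℝ)^j) ^ 2 : ℝ) : ℂ) *
          Complex.exp (Complex.I * ((x i * s + T * s ^ 2 : ℝ) : ℂ))‖
            ≤ 30*D/Real.sqrt |(γ:ℝ)| := by
        intro i
        refine le_trans (KDB_osc1d ψ hψs hψ0 D hD ((2:ℝ)^j) hN1 T (x i) hT0) ?_
        gcongr 30*D/?_
        exact Real.sqrt_le_sqrt hTγ
      calc ∏ i : Fin 3, ‖∫ s : ℝ, ((φ1 (s / (2:ℝ)^j) ^ 2 : ℝ) : ℂ) *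
            Complex.exp (Complex.I * ((x i * s + T * s ^ 2 : ℝ) : ℂ))‖
          ≤ ∏ _i : Fin 3, (30*D/Real.sqrt |(γ:ℝ)|) :=
            Finset.prod_le_prod (fun i _ => norm_nonneg _) (fun i _ => hone i)
        _ = (30*D/Real.sqrt |(γ:ℝ)|)^3 := by
            rw [Finset.prod_const, Finset.card_univ, Fintype.card_fin]
        _ = (30*D)^3 * |(γ:ℝ)| ^ (-(3:ℝ)/2) := by
            rw [div_pow]
            have h3 : (Real.sqrt |(γ:ℝ)|)^(3:ℕ) = |(γ:ℝ)| ^ ((3:ℝ)/2) := by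
              rw [Real.sqrt_eq_rpow, ← Real.rpow_natCast (|(γ:ℝ)| ^ ((1:ℝ)/2)) 3,
                ← Real.rpow_mul (abs_nonneg _)]
              norm_num
            rw [h3, div_eq_mul_inv, ← Real.rpow_neg (abs_nonneg _)]
            norm_num
    have hS : ‖∑' k : ℤ, ((φ1 ((k:ℝ)/(2:ℝ)^j) ^ 2 : ℝ):ℂ) *
        Complex.exp (Complex.I * ((y*(k:ℝ) + T*(k:ℝ)^2 : ℝ):ℂ))‖ ≤ 5*M^2*(2:ℝ)^j := by
      rw [KDB_tsum_fin φ1 h0 j _]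
      refine le_trans (norm_sum_le _ _) ?_
      have hterm : ∀ k' ∈ Finset.Icc (-(2^(j+1):ℤ)) (2^(j+1)),
          ‖((φ1 ((k':ℝ)/(2:ℝ)^j) ^ 2 : ℝ):ℂ) *
            Complex.exp (Complex.I * ((y*(k':ℝ) + T*(k':ℝ)^2 : ℝ):ℂ))‖ ≤ M^2 := by
        intro k' _
        rw [norm_mul, KDB_norm_exp_mul_I, mul_one, Complex.norm_real, Real.norm_eq_abs]
        exact hMψ _
      refine le_trans (Finset.sum_le_sum hterm) ?_
      rw [Finset.sum_const, nsmul_eq_mul]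
      have hcard : (((Finset.Icc (-(2^(j+1):ℤ)) (2^(j+1))).card : ℕ) : ℝ) ≤ 5 * (2:ℝ)^j := by
        rw [Int.card_Icc]
        have h4 : (2^(j+1) + 1 - -(2^(j+1)) : ℤ) = 2*2^(j+1)+1 := by ring
        rw [h4]
        have h5 : ((((2*2^(j+1)+1 : ℤ)).toNat : ℕ) : ℝ) = 2*(2:ℝ)^(j+1)+1 := by
          rw [show ((((2*2^(j+1)+1 : ℤ)).toNat : ℕ) : ℝ)
              = ((((2*2^(j+1)+1 : ℤ)).toNat : ℤ) : ℝ) by push_cast; ring,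
            Int.toNat_of_nonneg (by positivity)]
          push_cast
          ring
        rw [h5, pow_succ]
        linarith
      calc (((Finset.Icc (-(2^(j+1):ℤ)) (2^(j+1))).card : ℕ) : ℝ) * M^2
          ≤ (5*(2:ℝ)^j) * M^2 := mul_le_mul_of_nonneg_right hcard (by positivity)
        _ = 5*M^2*(2:ℝ)^j := by ring
    calc ‖∫ ξ : Fin 3 → ℝ, ((∏ i, φ1 (ξ i / (2:ℝ)^j) ^ 2 : ℝ) : ℂ) *
            Complex.exp (Complex.I * (((∑ i, x i * ξ i) + T * (∑ i, ξ i ^ 2) : ℝ) : ℂ))‖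
          * ‖∑' k : ℤ, ((φ1 ((k:ℝ)/(2:ℝ)^j) ^ 2 : ℝ):ℂ) *
            Complex.exp (Complex.I * ((y*(k:ℝ) + T*(k:ℝ)^2 : ℝ):ℂ))‖
        ≤ ((30*D)^3 * |(γ:ℝ)| ^ (-(3:ℝ)/2)) * (5*M^2*(2:ℝ)^j) :=
          mul_le_mul hA hS (norm_nonneg _)
            (mul_nonneg (by positivity) (Real.rpow_nonneg (abs_nonneg _) _))
      _ = C1 * |(γ:ℝ)| ^ (-(3:ℝ)/2) * (2:ℝ)^j := by rw [hC1]; ring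
      _ ≤ max C1 C2 * |(γ:ℝ)| ^ (-(3:ℝ)/2) * (2:ℝ)^j := by
          gcongr
          exact le_max_left _ _
  · -- Part 2 : Fourier transform bound
    intro ξ k τ
    have hπ2 : (0:ℝ) < 2*Real.pi := by positivity
    have hginv : ∀ (T w : ℝ), (∫ s : ℝ, (∫ η : ℝ, ((φ1 (η / (2:ℝ)^j) ^ 2 : ℝ) : ℂ) *
          Complex.exp (Complex.I * ((s*η + T*η^2 : ℝ):ℂ)))
          * Complex.exp (-Complex.I * ((s*w : ℝ):ℂ)))
        = 2*Real.pi * (((φ1 (w / (2:ℝ)^j) ^ 2 : ℝ) : ℂ)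
            * Complex.exp (Complex.I * ((T*w^2 : ℝ):ℂ))) := by
      intro T w
      set g : ℝ → ℂ := fun η => ((φ1 (η / (2:ℝ)^j) ^ 2 : ℝ) : ℂ)
          * Complex.exp (Complex.I * ((T*η^2 : ℝ):ℂ)) with hg
      have hg_sm : ContDiff ℝ (⊤:ℕ∞) g := by
        apply ContDiff.mul
        · exact Complex.ofRealCLM.contDiff.comp ((hs.comp (contDiff_id.div_const ((2:ℝ)^j))).pow 2)
        · apply ContDiff.cexp
          apply ContDiff.mul contDiff_const
          exact Complex.ofRealCLM.contDiff.comp (contDiff_const.mul (contDiff_id.pow 2))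
      have hg_cs : HasCompactSupport g := by
        apply HasCompactSupport.intro (isCompact_Icc (a := -(2*(2:ℝ)^j)) (b := 2*(2:ℝ)^j))
        intro u hu
        have h2u : 2 ≤ |u/(2:ℝ)^j| := by
          rw [abs_div, _root_.abs_of_pos hN0, le_div_iff₀ hN0]
          simp only [Set.mem_Icc, not_and_or, not_le] at hu
          rcases hu with h|h
          · rw [abs_of_nonpos (by nlinarith : u ≤ 0)]; linarith
          · rw [_root_.abs_of_nonneg (by nlinarith : 0 ≤ u)]; linarith
        rw [hg]
        simp only
        rw [h0 _ h2u]
        norm_num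
      have hmatch : (fun s : ℝ => (∫ η : ℝ, ((φ1 (η / (2:ℝ)^j) ^ 2 : ℝ) : ℂ) *
            Complex.exp (Complex.I * ((s*η + T*η^2 : ℝ):ℂ)))
            * Complex.exp (-Complex.I * ((s*w : ℝ):ℂ)))
          = fun s : ℝ => (∫ η : ℝ, g η * Complex.exp (Complex.I * ((s*η : ℝ):ℂ)))
              * Complex.exp (-Complex.I * ((s*w : ℝ):ℂ)) := by
        funext s
        congr 1
        apply MeasureTheory.integral_congr_ae
        filter_upwards with η
        rw [hg]
        simp only
        rw [mul_assoc, ← Complex.exp_add]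
        congr 2
        push_cast
        ring
      rw [hmatch, KDB_inversion g hg_sm hg_cs w]
    have hinner : ∀ t : ℝ,
        (∫ y in Set.Ioc (0:ℝ) (2*Real.pi), ∫ x : Fin 3 → ℝ,
          KN φ1 ((2:ℝ)^j) x y (2*Real.pi*(γ:ℝ) + t)
            * Complex.exp (-Complex.I * (((∑ i, x i * ξ i) + y * (k:ℝ) + t * τ : ℝ) : ℂ)))
        = (Complex.exp (-Complex.I * ((t*τ : ℝ):ℂ)) * (((2*Real.pi : ℝ)):ℂ)
              * ((φ1 ((k:ℝ)/(2:ℝ)^j) ^ 2 : ℝ):ℂ)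
              * Complex.exp (Complex.I * (((2*Real.pi*(γ:ℝ)+t)*(k:ℝ)^2 : ℝ):ℂ)))
          * ∏ i : Fin 3, (2*Real.pi * (((φ1 (ξ i / (2:ℝ)^j) ^ 2 : ℝ) : ℂ)
              * Complex.exp (Complex.I * (((2*Real.pi*(γ:ℝ)+t)*(ξ i)^2 : ℝ):ℂ)))) := by
      intro t
      have hx : ∀ y : ℝ, (∫ x : Fin 3 → ℝ, KN φ1 ((2:ℝ)^j) x y (2*Real.pi*(γ:ℝ) + t)
            * Complex.exp (-Complex.I * (((∑ i, x i * ξ i) + y * (k:ℝ) + t * τ : ℝ) : ℂ)))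
          = ((∑' k' : ℤ, ((φ1 ((k':ℝ)/(2:ℝ)^j) ^ 2 : ℝ):ℂ)
              * Complex.exp (Complex.I * ((y*(k':ℝ) + (2*Real.pi*(γ:ℝ)+t)*(k':ℝ)^2 : ℝ):ℂ)))
              * Complex.exp (-Complex.I * ((y*(k:ℝ) + t*τ : ℝ):ℂ)))
            * ∏ i : Fin 3, (∫ s : ℝ, (∫ η : ℝ, ((φ1 (η / (2:ℝ)^j) ^ 2 : ℝ) : ℂ) *
                Complex.exp (Complex.I * ((s*η + (2*Real.pi*(γ:ℝ)+t)*η^2 : ℝ):ℂ)))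
                * Complex.exp (-Complex.I * ((s*(ξ i) : ℝ):ℂ))) := by
        intro y
        have hpt : (fun x : Fin 3 → ℝ => KN φ1 ((2:ℝ)^j) x y (2*Real.pi*(γ:ℝ) + t)
              * Complex.exp (-Complex.I * (((∑ i, x i * ξ i) + y * (k:ℝ) + t * τ : ℝ) : ℂ)))
            = fun x : Fin 3 → ℝ => ((∑' k' : ℤ, ((φ1 ((k':ℝ)/(2:ℝ)^j) ^ 2 : ℝ):ℂ)
                * Complex.exp (Complex.I * ((y*(k':ℝ) + (2*Real.pi*(γ:ℝ)+t)*(k':ℝ)^2 : ℝ):ℂ)))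
                * Complex.exp (-Complex.I * ((y*(k:ℝ) + t*τ : ℝ):ℂ)))
              * ∏ i : Fin 3, ((∫ η : ℝ, ((φ1 (η / (2:ℝ)^j) ^ 2 : ℝ) : ℂ) *
                  Complex.exp (Complex.I * ((x i * η + (2*Real.pi*(γ:ℝ)+t)*η^2 : ℝ):ℂ)))
                * Complex.exp (-Complex.I * ((x i * ξ i : ℝ):ℂ))) := by
          funext x
          rw [KN, KDB_kn_factor φ1 ((2:ℝ)^j) (2*Real.pi*(γ:ℝ)+t) x]
          have hsplit : -Complex.I * (((∑ i, x i * ξ i) + y * (k:ℝ) + t * τ : ℝ) : ℂ)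
              = (∑ i : Fin 3, -Complex.I * ((x i * ξ i : ℝ):ℂ))
                + -Complex.I * ((y*(k:ℝ) + t*τ : ℝ):ℂ) := by
            rw [← Finset.mul_sum]
            push_cast
            ring
          rw [hsplit, Complex.exp_add, Complex.exp_sum, Finset.prod_mul_distrib]
          ring
        rw [hpt, MeasureTheory.integral_const_mul,
          MeasureTheory.integral_fintype_prod_volume_eq_prod
            (f := fun i (s:ℝ) => (∫ η : ℝ, ((φ1 (η / (2:ℝ)^j) ^ 2 : ℝ) : ℂ) *
                Complex.exp (Complex.I * ((s*η + (2*Real.pi*(γ:ℝ)+t)*η^2 : ℝ):ℂ)))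
              * Complex.exp (-Complex.I * ((s*(ξ i) : ℝ):ℂ)))]
      calc (∫ y in Set.Ioc (0:ℝ) (2*Real.pi), ∫ x : Fin 3 → ℝ,
            KN φ1 ((2:ℝ)^j) x y (2*Real.pi*(γ:ℝ) + t)
            * Complex.exp (-Complex.I * (((∑ i, x i * ξ i) + y * (k:ℝ) + t * τ : ℝ) : ℂ)))
          = ∫ y in Set.Ioc (0:ℝ) (2*Real.pi),
              ((∑' k' : ℤ, ((φ1 ((k':ℝ)/(2:ℝ)^j) ^ 2 : ℝ):ℂ)
                * Complex.exp (Complex.I * ((y*(k':ℝ) + (2*Real.pi*(γ:ℝ)+t)*(k':ℝ)^2 : ℝ):ℂ)))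
                * Complex.exp (-Complex.I * ((y*(k:ℝ) + t*τ : ℝ):ℂ)))
              * ∏ i : Fin 3, (∫ s : ℝ, (∫ η : ℝ, ((φ1 (η / (2:ℝ)^j) ^ 2 : ℝ) : ℂ) *
                  Complex.exp (Complex.I * ((s*η + (2*Real.pi*(γ:ℝ)+t)*η^2 : ℝ):ℂ)))
                  * Complex.exp (-Complex.I * ((s*(ξ i) : ℝ):ℂ))) := by
            apply MeasureTheory.integral_congr_ae
            filter_upwards with y
            exact hx y
        _ = (∫ y in Set.Ioc (0:ℝ) (2*Real.pi),
              (∑' k' : ℤ, ((φ1 ((k':ℝ)/(2:ℝ)^j) ^ 2 : ℝ):ℂ)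
                * Complex.exp (Complex.I * ((y*(k':ℝ) + (2*Real.pi*(γ:ℝ)+t)*(k':ℝ)^2 : ℝ):ℂ)))
                * Complex.exp (-Complex.I * ((y*(k:ℝ) + t*τ : ℝ):ℂ)))
              * ∏ i : Fin 3, (∫ s : ℝ, (∫ η : ℝ, ((φ1 (η / (2:ℝ)^j) ^ 2 : ℝ) : ℂ) *
                  Complex.exp (Complex.I * ((s*η + (2*Real.pi*(γ:ℝ)+t)*η^2 : ℝ):ℂ)))
                  * Complex.exp (-Complex.I * ((s*(ξ i) : ℝ):ℂ))) :=
            MeasureTheory.integral_mul_const _ _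
        _ = (Complex.exp (-Complex.I * ((t*τ : ℝ):ℂ)) * (((2*Real.pi : ℝ)):ℂ)
              * ((φ1 ((k:ℝ)/(2:ℝ)^j) ^ 2 : ℝ):ℂ)
              * Complex.exp (Complex.I * (((2*Real.pi*(γ:ℝ)+t)*(k:ℝ)^2 : ℝ):ℂ)))
              * ∏ i : Fin 3, (∫ s : ℝ, (∫ η : ℝ, ((φ1 (η / (2:ℝ)^j) ^ 2 : ℝ) : ℂ) *
                  Complex.exp (Complex.I * ((s*η + (2*Real.pi*(γ:ℝ)+t)*η^2 : ℝ):ℂ)))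
                  * Complex.exp (-Complex.I * ((s*(ξ i) : ℝ):ℂ))) := by
            rw [KDB_circle φ1 hs.continuous h0 j (2*Real.pi*(γ:ℝ)+t) t τ k]
        _ = (Complex.exp (-Complex.I * ((t*τ : ℝ):ℂ)) * (((2*Real.pi : ℝ)):ℂ)
              * ((φ1 ((k:ℝ)/(2:ℝ)^j) ^ 2 : ℝ):ℂ)
              * Complex.exp (Complex.I * (((2*Real.pi*(γ:ℝ)+t)*(k:ℝ)^2 : ℝ):ℂ)))
          * ∏ i : Fin 3, (2*Real.pi * (((φ1 (ξ i / (2:ℝ)^j) ^ 2 : ℝ) : ℂ)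
              * Complex.exp (Complex.I * (((2*Real.pi*(γ:ℝ)+t)*(ξ i)^2 : ℝ):ℂ)))) := by
            congr 1
            exact Finset.prod_congr rfl (fun i _ => hginv (2*Real.pi*(γ:ℝ)+t) (ξ i))
    have hstep : stFT3 (fun x y t => KN φ1 ((2:ℝ)^j) x y (2*Real.pi*(γ:ℝ) + t)) ξ k τ
        = ∫ t in Set.Icc (-(2*Real.pi)) (2*Real.pi),
            ((Complex.exp (-Complex.I * ((t*τ : ℝ):ℂ)) * (((2*Real.pi : ℝ)):ℂ)
              * ((φ1 ((k:ℝ)/(2:ℝ)^j) ^ 2 : ℝ):ℂ)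
              * Complex.exp (Complex.I * (((2*Real.pi*(γ:ℝ)+t)*(k:ℝ)^2 : ℝ):ℂ)))
            * ∏ i : Fin 3, (2*Real.pi * (((φ1 (ξ i / (2:ℝ)^j) ^ 2 : ℝ) : ℂ)
              * Complex.exp (Complex.I * (((2*Real.pi*(γ:ℝ)+t)*(ξ i)^2 : ℝ):ℂ))))) := by
      rw [stFT3]
      apply MeasureTheory.integral_congr_ae
      filter_upwards with t
      exact hinner t
    rw [hstep]
    have hGb : ∀ t ∈ Set.Icc (-(2*Real.pi)) (2*Real.pi),
        ‖(Complex.exp (-Complex.I * ((t*τ : ℝ):ℂ)) * (((2*Real.pi : ℝ)):ℂ)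
              * ((φ1 ((k:ℝ)/(2:ℝ)^j) ^ 2 : ℝ):ℂ)
              * Complex.exp (Complex.I * (((2*Real.pi*(γ:ℝ)+t)*(k:ℝ)^2 : ℝ):ℂ)))
            * ∏ i : Fin 3, (2*Real.pi * (((φ1 (ξ i / (2:ℝ)^j) ^ 2 : ℝ) : ℂ)
              * Complex.exp (Complex.I * (((2*Real.pi*(γ:ℝ)+t)*(ξ i)^2 : ℝ):ℂ))))‖
          ≤ (2*Real.pi)^4 * M^8 := by
      intro t _
      rw [norm_mul]
      have hA4 : ‖Complex.exp (-Complex.I * ((t*τ : ℝ):ℂ)) * (((2*Real.pi : ℝ)):ℂ)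
              * ((φ1 ((k:ℝ)/(2:ℝ)^j) ^ 2 : ℝ):ℂ)
              * Complex.exp (Complex.I * (((2*Real.pi*(γ:ℝ)+t)*(k:ℝ)^2 : ℝ):ℂ))‖
            ≤ 2*Real.pi * M^2 := by
        rw [norm_mul, norm_mul, norm_mul, KDB_norm_exp_neg_I_mul, KDB_norm_exp_mul_I,
          Complex.norm_real, Complex.norm_real, Real.norm_eq_abs, Real.norm_eq_abs,
          _root_.abs_of_pos hπ2, one_mul, mul_one]
        exact mul_le_mul_of_nonneg_left (hMψ _) hπ2.le
      have hP : ‖∏ i : Fin 3, (2*Real.pi * (((φ1 (ξ i / (2:ℝ)^j) ^ 2 : ℝ) : ℂ)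
              * Complex.exp (Complex.I * (((2*Real.pi*(γ:ℝ)+t)*(ξ i)^2 : ℝ):ℂ))))‖
            ≤ (2*Real.pi * M^2)^3 := by
        have hfac : ∀ i : Fin 3, ‖2*(Real.pi:ℂ) * (((φ1 (ξ i / (2:ℝ)^j) ^ 2 : ℝ) : ℂ)
              * Complex.exp (Complex.I * (((2*Real.pi*(γ:ℝ)+t)*(ξ i)^2 : ℝ):ℂ)))‖
            ≤ 2*Real.pi * M^2 := by
          intro i
          have h2 : ‖2*(Real.pi:ℂ)‖ = 2*Real.pi := by
            rw [show 2*(Real.pi:ℂ) = (((2*Real.pi : ℝ)):ℂ) by push_cast; ring,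
              Complex.norm_real, Real.norm_eq_abs, _root_.abs_of_pos hπ2]
          rw [norm_mul, h2, norm_mul, KDB_norm_exp_mul_I, mul_one,
            Complex.norm_real, Real.norm_eq_abs]
          exact mul_le_mul_of_nonneg_left (hMψ _) hπ2.le
        rw [norm_prod]
        refine le_trans (Finset.prod_le_prod (fun i _ => norm_nonneg _)
          (fun i _ => hfac i)) ?_
        rw [Finset.prod_const, Finset.card_univ, Fintype.card_fin]
      calc ‖Complex.exp (-Complex.I * ((t*τ : ℝ):ℂ)) * (((2*Real.pi : ℝ)):ℂ)
              * ((φ1 ((k:ℝ)/(2:ℝ)^j) ^ 2 : ℝ):ℂ)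
              * Complex.exp (Complex.I * (((2*Real.pi*(γ:ℝ)+t)*(k:ℝ)^2 : ℝ):ℂ))‖
            * ‖∏ i : Fin 3, (2*Real.pi * (((φ1 (ξ i / (2:ℝ)^j) ^ 2 : ℝ) : ℂ)
              * Complex.exp (Complex.I * (((2*Real.pi*(γ:ℝ)+t)*(ξ i)^2 : ℝ):ℂ))))‖
          ≤ (2*Real.pi * M^2) * (2*Real.pi * M^2)^3 :=
            mul_le_mul hA4 hP (norm_nonneg _) (by positivity)
        _ = (2*Real.pi)^4 * M^8 := by ring
    have hmeas : volume (Set.Icc (-(2*Real.pi)) (2*Real.pi)) < ⊤ := by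
      rw [Real.volume_Icc]
      exact ENNReal.ofReal_lt_top
    have hGm : AEStronglyMeasurable (fun t : ℝ =>
        (Complex.exp (-Complex.I * ((t*τ : ℝ):ℂ)) * (((2*Real.pi : ℝ)):ℂ)
              * ((φ1 ((k:ℝ)/(2:ℝ)^j) ^ 2 : ℝ):ℂ)
              * Complex.exp (Complex.I * (((2*Real.pi*(γ:ℝ)+t)*(k:ℝ)^2 : ℝ):ℂ)))
            * ∏ i : Fin 3, (2*Real.pi * (((φ1 (ξ i / (2:ℝ)^j) ^ 2 : ℝ) : ℂ)
              * Complex.exp (Complex.I * (((2*Real.pi*(γ:ℝ)+t)*(ξ i)^2 : ℝ):ℂ)))))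
        (volume.restrict (Set.Icc (-(2*Real.pi)) (2*Real.pi))) := by
      apply Continuous.aestronglyMeasurable
      apply Continuous.mul
      · fun_prop
      · apply continuous_finset_prod
        intro i _
        fun_prop
    refine le_trans (MeasureTheory.norm_setIntegral_le_of_norm_le_const hmeas hGb) ?_
    rw [measureReal_def, Real.volume_Icc, ENNReal.toReal_ofReal
      (by linarith [Real.pi_pos] : (0:ℝ) ≤ 2*Real.pi - -(2*Real.pi))]
    have hfin : (2*Real.pi)^4 * M^8 * (2*Real.pi - -(2*Real.pi)) = C2 := by rw [hC2]; ring
    rw [hfin]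
    exact le_max_right _ _
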